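/- For every a, b, c ∈ C, the function u(x,y) = −ay + c − b(x+a)² solves the PDE system u_{xx} = u_x/(x − u_y), u_{xy} = 0, u_{yy} = 0 (on the domain where x ≠ u_y), and conversely every local solution of this system is of this form. -/

import Mathlib

/-- Partial derivative in the `x`-direction of a function on `ℂ × ℂ`. -/
noncomputable def ddx (f : ℂ × ℂ → ℂ) : ℂ × ℂ → ℂ := fun z => fderiv ℂ f z (1, 0)

/-- Partial derivative in the `y`-direction of a function on `ℂ × ℂ`. -/
noncomputable def ddy (f : ℂ × ℂ → ℂ) : ℂ × ℂ → ℂ := fun z => fderiv ℂ f z (0, 1)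


lemma hasFDerivAt_uf (a b c : ℂ) (z : ℂ × ℂ) :
    HasFDerivAt (fun w : ℂ × ℂ => -a * w.2 + c - b * (w.1 + a) ^ 2)
      (((-a) • (ContinuousLinearMap.snd ℂ ℂ ℂ)) -
        ((2 * b * (z.1 + a)) • (ContinuousLinearMap.fst ℂ ℂ ℂ))) z := by
  have h1 : HasFDerivAt (fun w : ℂ × ℂ => -a * w.2 + c)
      ((-a) • (ContinuousLinearMap.snd ℂ ℂ ℂ)) z :=
    ((hasFDerivAt_snd (p := z)).const_mul (-a)).add_const c
  have h2 : HasFDerivAt (fun w : ℂ × ℂ => b * (w.1 + a) ^ 2)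
      ((2 * b * (z.1 + a)) • (ContinuousLinearMap.fst ℂ ℂ ℂ)) z := by
    have h0 : HasFDerivAt (fun w : ℂ × ℂ => w.1 + a)
        (ContinuousLinearMap.fst ℂ ℂ ℂ) z := (hasFDerivAt_fst (p := z)).add_const a
    have h3 := (h0.mul h0).const_mul b
    have : (fun w : ℂ × ℂ => b * (w.1 + a) ^ 2) = fun w : ℂ × ℂ => b * ((w.1 + a) * (w.1 + a)) := by
      funext w; ring
    rw [this]
    refine h3.congr_fderiv ?_
    ext
    · simp; ring
    · simp
  exact h1.sub h2

lemma ddx_uf (a b c : ℂ) (z : ℂ × ℂ) :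
    ddx (fun w : ℂ × ℂ => -a * w.2 + c - b * (w.1 + a) ^ 2) z = -(2 * b * (z.1 + a)) := by
  have h := (hasFDerivAt_uf a b c z).fderiv
  show fderiv ℂ _ z (1, 0) = _
  rw [h]; simp

lemma ddy_uf (a b c : ℂ) (z : ℂ × ℂ) :
    ddy (fun w : ℂ × ℂ => -a * w.2 + c - b * (w.1 + a) ^ 2) z = -a := by
  have h := (hasFDerivAt_uf a b c z).fderiv
  show fderiv ℂ _ z (0, 1) = _
  rw [h]; simp

lemma ddx_ddx_uf (a b c : ℂ) (z : ℂ × ℂ) :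
    ddx (ddx (fun w : ℂ × ℂ => -a * w.2 + c - b * (w.1 + a) ^ 2)) z = -(2 * b) := by
  have hfun : ddx (fun w : ℂ × ℂ => -a * w.2 + c - b * (w.1 + a) ^ 2)
      = fun w : ℂ × ℂ => -(2 * b * (w.1 + a)) := funext (ddx_uf a b c)
  rw [hfun]
  have h : HasFDerivAt (fun w : ℂ × ℂ => -(2 * b * (w.1 + a)))
      ((-(2 * b)) • (ContinuousLinearMap.fst ℂ ℂ ℂ)) z := by
    have h0 : HasFDerivAt (fun w : ℂ × ℂ => w.1 + a)
        (ContinuousLinearMap.fst ℂ ℂ ℂ) z := (hasFDerivAt_fst (p := z)).add_const a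
    have := (h0.const_mul (2 * b)).neg
    refine this.congr_fderiv ?_
    ext <;> simp
  show fderiv ℂ _ z (1, 0) = _
  rw [h.fderiv]; simp

lemma ddy_ddx_uf (a b c : ℂ) (z : ℂ × ℂ) :
    ddy (ddx (fun w : ℂ × ℂ => -a * w.2 + c - b * (w.1 + a) ^ 2)) z = 0 := by
  have hfun : ddx (fun w : ℂ × ℂ => -a * w.2 + c - b * (w.1 + a) ^ 2)
      = fun w : ℂ × ℂ => -(2 * b * (w.1 + a)) := funext (ddx_uf a b c)
  rw [hfun]
  have h : HasFDerivAt (fun w : ℂ × ℂ => -(2 * b * (w.1 + a)))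
      ((-(2 * b)) • (ContinuousLinearMap.fst ℂ ℂ ℂ)) z := by
    have h0 : HasFDerivAt (fun w : ℂ × ℂ => w.1 + a)
        (ContinuousLinearMap.fst ℂ ℂ ℂ) z := (hasFDerivAt_fst (p := z)).add_const a
    have := (h0.const_mul (2 * b)).neg
    refine this.congr_fderiv ?_
    ext <;> simp
  show fderiv ℂ _ z (0, 1) = _
  rw [h.fderiv]; simp

lemma ddy_ddy_uf (a b c : ℂ) (z : ℂ × ℂ) :
    ddy (ddy (fun w : ℂ × ℂ => -a * w.2 + c - b * (w.1 + a) ^ 2)) z = 0 := by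
  have hfun : ddy (fun w : ℂ × ℂ => -a * w.2 + c - b * (w.1 + a) ^ 2)
      = fun _ : ℂ × ℂ => -a := funext (ddy_uf a b c)
  rw [hfun]
  show fderiv ℂ _ z (0, 1) = _
  rw [fderiv_fun_const]; simp

open Set in
lemma const_on_preconnected {U : Set (ℂ × ℂ)} (hU : IsOpen U) (hUc : IsPreconnected U)
    {f : ℂ × ℂ → ℂ} (hd : ∀ z ∈ U, DifferentiableAt ℂ f z)
    (h0 : ∀ z ∈ U, fderiv ℂ f z = 0) {z₀ : ℂ × ℂ} (hz₀ : z₀ ∈ U) :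
    ∀ z ∈ U, f z = f z₀ := by
  set S : Set (ℂ × ℂ) := {z ∈ U | f z = f z₀} with hS
  have hSopen : IsOpen S := by
    rw [isOpen_iff_mem_nhds]
    rintro z ⟨hzU, hzf⟩
    rcases Metric.isOpen_iff.1 hU z hzU with ⟨r, hr, hball⟩
    have hconst : ∀ w ∈ Metric.ball z r, f w = f z := by
      intro w hw
      refine (convex_ball z r).is_const_of_fderivWithin_eq_zero
        (fun x hx => (hd x (hball hx)).differentiableWithinAt) (fun x hx => ?_) hw
        (Metric.mem_ball_self hr)
      rw [fderivWithin_of_isOpen Metric.isOpen_ball hx]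
      exact h0 x (hball hx)
    filter_upwards [Metric.ball_mem_nhds z hr] with w hw
    exact ⟨hball hw, (hconst w hw).trans hzf⟩
  have hTopen : IsOpen {z ∈ U | f z ≠ f z₀} := by
    have hcont : ContinuousOn f U := fun x hx => (hd x hx).continuousAt.continuousWithinAt
    have := hcont.isOpen_inter_preimage hU (isOpen_compl_singleton (x := f z₀))
    convert this using 1
    ext; simp
  intro z hz
  have hsub : U ⊆ S :=
    hUc.subset_left_of_subset_union hSopen hTopen
      (Set.disjoint_left.2 (by rintro w ⟨-, h1⟩ ⟨-, h2⟩; exact h2 h1))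
      (fun w hw => by by_cases h : f w = f z₀ <;> [exact Or.inl ⟨hw, h⟩; exact Or.inr ⟨hw, h⟩])
      ⟨z₀, hz₀, hz₀, rfl⟩
  exact (hsub hz).2

lemma clm_decomp (L : (ℂ × ℂ) →L[ℂ] ℂ) (w : ℂ × ℂ) :
    L w = w.1 * L (1, 0) + w.2 * L (0, 1) := by
  have hw : w = w.1 • ((1 : ℂ), (0 : ℂ)) + w.2 • ((0 : ℂ), (1 : ℂ)) := by
    simp [Prod.ext_iff]
  conv_lhs => rw [hw]
  rw [map_add, map_smul, map_smul, smul_eq_mul, smul_eq_mul]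

lemma diff_fderiv {u : ℂ × ℂ → ℂ} {z : ℂ × ℂ} (h : ContDiffAt ℂ 2 u z) :
    DifferentiableAt ℂ (fderiv ℂ u) z :=
  (h.fderiv_right (m := 1) (by norm_num)).differentiableAt (by norm_num)

lemma fderiv_dirderiv {u : ℂ × ℂ → ℂ} {z : ℂ × ℂ} (h : ContDiffAt ℂ 2 u z) (v w : ℂ × ℂ) :
    fderiv ℂ (fun y => fderiv ℂ u y v) z w = fderiv ℂ (fderiv ℂ u) z w v := by
  have hd := diff_fderiv h
  rw [fderiv_clm_apply hd (differentiableAt_const v)]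
  simp

lemma converse_dir (U : Set (ℂ × ℂ)) (hU : IsOpen U) (hUc : IsPreconnected U)
    (u : ℂ × ℂ → ℂ) (hu : ContDiffOn ℂ ⊤ u U)
    (hpde : ∀ z ∈ U, z.1 ≠ ddy u z ∧
      ddx (ddx u) z = ddx u z / (z.1 - ddy u z) ∧
      ddy (ddx u) z = 0 ∧ ddy (ddy u) z = 0) :
    ∃ a b c : ℂ, ∀ z ∈ U, u z = -a * z.2 + c - b * (z.1 + a) ^ 2 := by
  rcases U.eq_empty_or_nonempty with rfl | ⟨z₀, hz₀⟩
  · exact ⟨0, 0, 0, by simp⟩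
  have hCD : ∀ z ∈ U, ContDiffAt ℂ 2 u z := fun z hz =>
    (hu.contDiffAt (hU.mem_nhds hz)).of_le le_top
  have hfd : ∀ z ∈ U, DifferentiableAt ℂ (fderiv ℂ u) z := fun z hz => diff_fderiv (hCD z hz)
  have hsym : ∀ z ∈ U, ∀ v w : ℂ × ℂ,
      fderiv ℂ (fderiv ℂ u) z v w = fderiv ℂ (fderiv ℂ u) z w v := fun z hz =>
    (hCD z hz).isSymmSndFDerivAt (by simp [minSmoothness_of_isRCLikeNormedField])
  -- second mixed derivatives vanish
  have hxy : ∀ z ∈ U, fderiv ℂ (fderiv ℂ u) z (0, 1) (1, 0) = 0 := by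
    intro z hz
    have := (hpde z hz).2.2.1
    rw [show ddy (ddx u) z = fderiv ℂ (fun y => fderiv ℂ u y (1, 0)) z (0, 1) from rfl] at this
    rw [← fderiv_dirderiv (hCD z hz)]
    exact this
  have hyy : ∀ z ∈ U, fderiv ℂ (fderiv ℂ u) z (0, 1) (0, 1) = 0 := by
    intro z hz
    have := (hpde z hz).2.2.2
    rw [show ddy (ddy u) z = fderiv ℂ (fun y => fderiv ℂ u y (0, 1)) z (0, 1) from rfl] at this
    rw [← fderiv_dirderiv (hCD z hz)]
    exact this
  -- differentiability of ddx u and ddy u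
  have hddxd : ∀ z ∈ U, DifferentiableAt ℂ (ddx u) z := fun z hz =>
    (hfd z hz).clm_apply (differentiableAt_const _)
  have hddyd : ∀ z ∈ U, DifferentiableAt ℂ (ddy u) z := fun z hz =>
    (hfd z hz).clm_apply (differentiableAt_const _)
  -- Step 1: ddy u is constant
  have hddy0 : ∀ z ∈ U, fderiv ℂ (ddy u) z = 0 := by
    intro z hz
    refine ContinuousLinearMap.ext fun w => ?_
    have h1 : fderiv ℂ (ddy u) z w = fderiv ℂ (fderiv ℂ u) z w (0, 1) :=
      fderiv_dirderiv (hCD z hz) (0, 1) w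
    rw [h1, hsym z hz, clm_decomp (fderiv ℂ (fderiv ℂ u) z (0, 1)) w, hxy z hz, hyy z hz]
    simp
  set a : ℂ := -(ddy u z₀) with ha
  have hddyc : ∀ z ∈ U, ddy u z = -a := by
    intro z hz
    rw [ha, neg_neg]
    exact const_on_preconnected hU hUc hddyd hddy0 hz₀ z hz
  have hne : ∀ z ∈ U, z.1 + a ≠ 0 := by
    intro z hz h
    exact (hpde z hz).1 (by rw [hddyc z hz]; linear_combination h)
  -- Step 2: ddx u z / (z.1 + a) is constant
  set q : ℂ × ℂ → ℂ := fun y => ddx u y * (y.1 + a)⁻¹ with hq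
  have hqd : ∀ z ∈ U, DifferentiableAt ℂ q z := by
    intro z hz
    exact (hddxd z hz).mul (((differentiableAt_fst).add_const a).inv (hne z hz))
  have hq0 : ∀ z ∈ U, fderiv ℂ q z = 0 := by
    intro z hz
    have h1 : HasFDerivAt (ddx u) (fderiv ℂ (ddx u) z) z := (hddxd z hz).hasFDerivAt
    have h2 : HasFDerivAt (fun y : ℂ × ℂ => (y.1 + a)⁻¹)
        ((-((z.1 + a) ^ 2)⁻¹) • (ContinuousLinearMap.fst ℂ ℂ ℂ)) z := by
      have h0 : HasFDerivAt (fun y : ℂ × ℂ => y.1 + a)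
          (ContinuousLinearMap.fst ℂ ℂ ℂ) z := (hasFDerivAt_fst (p := z)).add_const a
      have hinv := hasDerivAt_inv (hne z hz)
      have h3 := hinv.comp_hasFDerivAt z h0
      have h4 : ((fun y : ℂ => y⁻¹) ∘ fun y : ℂ × ℂ => y.1 + a) = fun y : ℂ × ℂ => (y.1 + a)⁻¹ := rfl
      rw [h4] at h3
      exact h3
    have h3 : HasFDerivAt q _ z := h1.mul h2
    rw [h3.fderiv]
    refine ContinuousLinearMap.ext fun w => ?_
    have hL10 : fderiv ℂ (ddx u) z (1, 0) = ddx u z / (z.1 + a) := by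
      have := (hpde z hz).2.1
      rw [show ddx (ddx u) z = fderiv ℂ (ddx u) z (1, 0) from rfl] at this
      rw [this, hddyc z hz]
      ring_nf
    have hL01 : fderiv ℂ (ddx u) z (0, 1) = 0 := (hpde z hz).2.2.1
    have hdec := clm_decomp (fderiv ℂ (ddx u) z) w
    simp only [ContinuousLinearMap.add_apply, ContinuousLinearMap.smul_apply,
      ContinuousLinearMap.neg_apply, ContinuousLinearMap.coe_fst',
      ContinuousLinearMap.zero_apply, smul_eq_mul]
    rw [hdec, hL10, hL01]
    field_simp [hne z hz]
    ring
  set k : ℂ := q z₀ with hk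
  have hqc : ∀ z ∈ U, ddx u z = k * (z.1 + a) := by
    intro z hz
    have h := const_on_preconnected hU hUc hqd hq0 hz₀ z hz
    rw [← hk] at h
    have h2 : q z = ddx u z * (z.1 + a)⁻¹ := rfl
    rw [h2] at h
    field_simp [hne z hz] at h
    exact h.trans (mul_comm _ _)
  set b : ℂ := -k / 2 with hb
  -- Step 3: g := u - uf a b 0 is constant
  set g : ℂ × ℂ → ℂ := fun y => u y - (-a * y.2 + 0 - b * (y.1 + a) ^ 2) with hg
  have hgd : ∀ z ∈ U, DifferentiableAt ℂ g z := by
    intro z hz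
    exact ((hCD z hz).differentiableAt (by norm_num)).sub (hasFDerivAt_uf a b 0 z).differentiableAt
  have hg0 : ∀ z ∈ U, fderiv ℂ g z = 0 := by
    intro z hz
    have h1 : HasFDerivAt u (fderiv ℂ u z) z :=
      ((hCD z hz).differentiableAt (by norm_num)).hasFDerivAt
    have h2 := hasFDerivAt_uf a b 0 z
    have h3 : HasFDerivAt g _ z := h1.sub h2
    rw [h3.fderiv]
    refine ContinuousLinearMap.ext fun w => ?_
    have hdec := clm_decomp (fderiv ℂ u z) w
    have hx : fderiv ℂ u z (1, 0) = k * (z.1 + a) := hqc z hz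
    have hy : fderiv ℂ u z (0, 1) = -a := hddyc z hz
    simp only [ContinuousLinearMap.sub_apply, ContinuousLinearMap.smul_apply,
      ContinuousLinearMap.coe_fst', ContinuousLinearMap.coe_snd',
      ContinuousLinearMap.zero_apply, smul_eq_mul]
    rw [hdec, hx, hy, hb]
    ring
  refine ⟨a, b, g z₀, ?_⟩
  intro z hz
  have := const_on_preconnected hU hUc hgd hg0 hz₀ z hz
  rw [hg] at this
  simp only at this
  linear_combination this

/-- **General solution of model III.6-1:** `u = −ay + c − b(x+a)²` solves
`u_xx = u_x/(x − u_y)`, `u_xy = 0`, `u_yy = 0` wherever `x ≠ u_y`, and conversely every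
local solution (on a connected open set) is of this form. -/
theorem III61_general_solution :
    (∀ a b c : ℂ, ∀ z : ℂ × ℂ,
      z.1 ≠ ddy (fun w => -a * w.2 + c - b * (w.1 + a) ^ 2) z →
        (ddx (ddx (fun w => -a * w.2 + c - b * (w.1 + a) ^ 2)) z
            = ddx (fun w => -a * w.2 + c - b * (w.1 + a) ^ 2) z
              / (z.1 - ddy (fun w => -a * w.2 + c - b * (w.1 + a) ^ 2) z) ∧
          ddy (ddx (fun w => -a * w.2 + c - b * (w.1 + a) ^ 2)) z = 0 ∧
          ddy (ddy (fun w => -a * w.2 + c - b * (w.1 + a) ^ 2)) z = 0)) ∧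
    (∀ (U : Set (ℂ × ℂ)), IsOpen U → IsPreconnected U →
      ∀ u : ℂ × ℂ → ℂ, ContDiffOn ℂ ⊤ u U →
        (∀ z ∈ U, z.1 ≠ ddy u z ∧
          ddx (ddx u) z = ddx u z / (z.1 - ddy u z) ∧
          ddy (ddx u) z = 0 ∧ ddy (ddy u) z = 0) →
        ∃ a b c : ℂ, ∀ z ∈ U, u z = -a * z.2 + c - b * (z.1 + a) ^ 2) := by
  constructor
  · intro a b c z hz
    have hne : z.1 + a ≠ 0 := by
      rw [ddy_uf] at hz
      intro h; exact hz (by linear_combination h)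
    refine ⟨?_, ddy_ddx_uf a b c z, ddy_ddy_uf a b c z⟩
    rw [ddx_ddx_uf, ddx_uf, ddy_uf]
    field_simp
    rw [sub_neg_eq_add, mul_div_cancel_right₀ _ hne]
  · exact converse_dir
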